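/- arXiv:1505.00634 — 2 statements merged into one kernel-verified Lean document; each statement's English description precedes it below -/
import Mathlib

section
/- Let P = (x_{s₁},...,x_{s_r}) be a monomial prime in S generated by r variables and m a positive integer. Then the polarization of P^m has the irredundant primary decomposition (P^m)^p = ⋂ (x_{s₁,t₁},...,x_{s_r,t_r}), the intersection over all tuples (t₁,...,t_r) with 1 ≤ t_j ≤ m for all j and t₁ + ⋯ + t_r ≤ m + r − 1. -/
open MvPolynomial

/-! ### Simplicial complexes, matroids -/

section Complexes

variable {α : Type*}

/-- A simplicial complex: a nonempty collection of finite subsets closed under subsets. -/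
def IsSimplicialComplex (Δ : Set (Finset α)) : Prop :=
  Δ.Nonempty ∧ ∀ F ∈ Δ, ∀ G ⊆ F, G ∈ Δ

/-- The facets (maximal faces) of a complex. -/
def facets (Δ : Set (Finset α)) : Set (Finset α) :=
  {F | F ∈ Δ ∧ ∀ G ∈ Δ, F ⊆ G → F = G}

/-- A complex is pure if all facets have the same cardinality. -/
def IsPure (Δ : Set (Finset α)) : Prop :=
  ∀ F ∈ facets Δ, ∀ G ∈ facets Δ, F.card = G.card

/-- A matroid: a simplicial complex with the augmentation exchange property. -/
def IsMatroidComplex [DecidableEq α] (Δ : Set (Finset α)) : Prop :=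
  IsSimplicialComplex Δ ∧
    ∀ F ∈ Δ, ∀ G ∈ Δ, F.card < G.card → ∃ i ∈ G \ F, insert i F ∈ Δ

/-- The complement complex `Δᶜ`, generated by the complements of the facets of `Δ`. -/
def complementComplex {n : ℕ} (Δ : Set (Finset (Fin n))) : Set (Finset (Fin n)) :=
  {G | ∃ F ∈ facets Δ, G ⊆ Fᶜ}

end Complexes

/-! ### Stanley-Reisner ideals and symbolic powers -/

section SR

variable (k : Type*) [Field k] {n : ℕ}

/-- The monomial prime `P_F = (x_i : i ∈ F)`. -/
noncomputable def varIdeal (F : Finset (Fin n)) : Ideal (MvPolynomial (Fin n) k) :=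
  Ideal.span ((fun i => (X i : MvPolynomial (Fin n) k)) '' ↑F)

/-- The Stanley-Reisner ideal of a complex. -/
noncomputable def SRIdeal (Δ : Set (Finset (Fin n))) : Ideal (MvPolynomial (Fin n) k) :=
  Ideal.span {u | ∃ F : Finset (Fin n), F ∉ Δ ∧ u = ∏ i ∈ F, X i}

/-- The `m`-th symbolic power of the Stanley-Reisner ideal:
`I_Δ^{(m)} = ⋂_{F ∈ F(Δᶜ)} P_F^m`. -/
noncomputable def symbPowSR (Δ : Set (Finset (Fin n))) (m : ℕ) :
    Ideal (MvPolynomial (Fin n) k) :=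
  ⨅ F ∈ facets (complementComplex Δ), (varIdeal k F) ^ m

variable {σ : Type*}

/-- A monomial (with coefficient 1). -/
def IsMonomialElem (p : MvPolynomial σ k) : Prop := ∃ d, p = monomial d 1

/-- A monomial ideal: generated by monomials. -/
def IsMonomialIdeal (I : Ideal (MvPolynomial σ k)) : Prop :=
  ∃ G : Set (MvPolynomial σ k), (∀ g ∈ G, IsMonomialElem k g) ∧ I = Ideal.span G

/-- Complete intersection monomial ideal: generated by a regular sequence of monomials. -/
def IsCIMonomialIdeal (I : Ideal (MvPolynomial σ k)) : Prop :=
  ∃ rs : List (MvPolynomial σ k), (∀ x ∈ rs, IsMonomialElem k x) ∧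
    RingTheory.Sequence.IsRegular (MvPolynomial σ k) rs ∧ I = Ideal.span {x | x ∈ rs}

end SR

/-! ### Prime filtrations, clean and pretty clean -/

section Clean

variable (k : Type*) [Field k] {σ : Type*}

/-- A prime filtration `I = I₀ ⊂ I₁ ⊂ ⋯ ⊂ I_r = S` of monomial ideals with cyclic
quotients `I_i/I_{i-1} ≅ S/p_i` (realized by `I_i = I_{i-1} + (v)` and `I_{i-1} : v = p_i`). -/
structure PrimeFiltration (I : Ideal (MvPolynomial σ k)) where
  len : ℕ
  c : ℕ → Ideal (MvPolynomial σ k)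
  p : ℕ → Ideal (MvPolynomial σ k)
  first : c 0 = I
  last : c len = ⊤
  strict : ∀ i < len, c i < c (i + 1)
  monomial : ∀ i ≤ len, IsMonomialIdeal k (c i)
  prime : ∀ i < len, (p (i + 1)).IsPrime
  cyclic : ∀ i < len, ∃ v, c (i + 1) = c i ⊔ Ideal.span {v} ∧
    Submodule.colon (c i) (Ideal.span {v}) = p (i + 1)

/-- The support of a prime filtration: the set of primes `p₁, …, p_r`. -/
def PrimeFiltration.supp {I : Ideal (MvPolynomial σ k)} (F : PrimeFiltration k I) :
    Set (Ideal (MvPolynomial σ k)) :=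
  {q | ∃ i < F.len, q = F.p (i + 1)}

/-- `S/I` is clean: it admits a prime filtration with support `Min(I)`. -/
def IsCleanIdeal (I : Ideal (MvPolynomial σ k)) : Prop :=
  ∃ F : PrimeFiltration k I, F.supp = I.minimalPrimes

/-- Pretty clean filtration: `p_i ⊆ p_j` with `i < j` forces `p_i = p_j`. -/
def PrimeFiltration.IsPrettyClean {I : Ideal (MvPolynomial σ k)}
    (F : PrimeFiltration k I) : Prop :=
  ∀ i j, 0 < i → i < j → j ≤ F.len → F.p i ≤ F.p j → F.p i = F.p j

/-- `S/I` is pretty clean: it admits a pretty clean prime filtration. -/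
def IsPrettyCleanIdeal (I : Ideal (MvPolynomial σ k)) : Prop :=
  ∃ F : PrimeFiltration k I, F.IsPrettyClean

end Clean

/-! ### Dimension, depth, Cohen-Macaulayness -/

section CM

/-- Krull dimension of a module, as `dim S/ann M`. -/
noncomputable def modDim (S : Type*) [CommRing S] (M : Type*) [AddCommGroup M]
    [Module S M] : WithBot (WithTop ℕ) :=
  ringKrullDim (S ⧸ Module.annihilator S M)

variable (k : Type*) [Field k] (n : ℕ)

/-- The graded maximal ideal `(x₁, …, xₙ)`. -/
noncomputable def maxIdeal : Ideal (MvPolynomial (Fin n) k) := Ideal.span (Set.range X)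

/-- A module over `k[x₁,…,xₙ]` is Cohen-Macaulay if it is trivial or admits a weakly
regular sequence in the graded maximal ideal whose length equals its Krull dimension
(i.e. depth = dim). -/
def IsCMmod (M : Type*) [AddCommGroup M] [Module (MvPolynomial (Fin n) k) M] : Prop :=
  Subsingleton M ∨ ∃ rs : List (MvPolynomial (Fin n) k),
    (∀ x ∈ rs, x ∈ maxIdeal k n) ∧ RingTheory.Sequence.IsWeaklyRegular M rs ∧
      modDim (MvPolynomial (Fin n) k) M = (rs.length : WithBot (WithTop ℕ))

/-- `S/I` is Cohen-Macaulay. -/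
def IsCMIdeal (I : Ideal (MvPolynomial (Fin n) k)) : Prop :=
  IsCMmod k n (MvPolynomial (Fin n) k ⧸ I)

/-- The subquotient `A/B` of two ideals, as a module. -/
def subQuot {S : Type*} [CommRing S] (A B : Ideal S) :=
  A ⧸ (Submodule.comap A.subtype B)

noncomputable instance {S : Type*} [CommRing S] (A B : Ideal S) : AddCommGroup (subQuot A B) := by
  unfold subQuot; infer_instance

noncomputable instance {S : Type*} [CommRing S] (A B : Ideal S) : Module S (subQuot A B) := by
  unfold subQuot; infer_instance

/-- Sequentially Cohen-Macaulay: there is a chain of monomial ideals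
`I = I₀ ⊂ ⋯ ⊂ I_r = S` with Cohen-Macaulay quotients of strictly increasing dimension. -/
def IsSeqCMIdeal (I : Ideal (MvPolynomial (Fin n) k)) : Prop :=
  ∃ (r : ℕ) (c : ℕ → Ideal (MvPolynomial (Fin n) k)),
    c 0 = I ∧ c r = ⊤ ∧ (∀ i ≤ r, IsMonomialIdeal k (c i)) ∧
    (∀ i < r, c i < c (i + 1)) ∧
    (∀ i < r, IsCMmod k n (subQuot (c (i + 1)) (c i))) ∧
    ∀ i, i + 1 < r →
      modDim (MvPolynomial (Fin n) k) (subQuot (c (i + 1)) (c i)) <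
        modDim (MvPolynomial (Fin n) k) (subQuot (c (i + 2)) (c (i + 1)))

end CM

/-! ### Graphs of 1-dimensional complexes -/

section Graphs

/-- The graph whose edges are the 2-element faces of `Δ`. -/
def complexGraph {n : ℕ} (Δ : Set (Finset (Fin n))) : SimpleGraph (Fin n) where
  Adj u v := u ≠ v ∧ ({u, v} : Finset (Fin n)) ∈ Δ
  symm := by
    refine ⟨fun u v h => ?_⟩
    exact ⟨h.1.symm, by rw [Finset.pair_comm]; exact h.2⟩
  loopless := ⟨fun u h => h.1 rfl⟩

end Graphs

/-! ### Linear quotients -/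

section LQ

variable (k : Type*) [Field k] {σ : Type*}

/-- A monomial ideal has linear quotients: its minimal generators can be ordered
`u₁, …, u_s` so that each colon `(u₁,…,u_{i-1}) : u_i` is generated by variables. -/
def HasLinearQuotients (J : Ideal (MvPolynomial σ k)) : Prop :=
  ∃ L : List (MvPolynomial σ k), (∀ u ∈ L, IsMonomialElem k u) ∧
    J = Ideal.span {u | u ∈ L} ∧
    ∀ i (h : i < L.length), 0 < i → ∃ V : Set σ,
      Submodule.colon (Ideal.span {u | u ∈ L.take i}) (Ideal.span {L.get ⟨i, h⟩}) =
        Ideal.span ((fun s => (X s : MvPolynomial σ k)) '' V)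

end LQ

/-! ### Symbolic powers via saturation at minimal primes -/

section Symb

variable {S : Type*} [CommRing S]

/-- The contraction of `J S_P` back to `S`: `{x | ∃ s ∉ P, s·x ∈ J}`. -/
def satAtPrime (J P : Ideal S) (hP : P.IsPrime) : Ideal S where
  carrier := {x | ∃ s, s ∉ P ∧ s * x ∈ J}
  zero_mem' := ⟨1, fun h => hP.ne_top ((Ideal.eq_top_iff_one P).2 h), by simp⟩
  add_mem' := by
    rintro a b ⟨s, hs, hsa⟩ ⟨t, ht, htb⟩
    refine ⟨s * t, fun h => ((hP.mem_or_mem h).elim hs ht), ?_⟩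
    have : s * t * (a + b) = t * (s * a) + s * (t * b) := by ring
    rw [this]
    exact Ideal.add_mem _ (Ideal.mul_mem_left _ _ hsa) (Ideal.mul_mem_left _ _ htb)
  smul_mem' := by
    rintro r a ⟨s, hs, hsa⟩
    refine ⟨s, hs, ?_⟩
    have : s * (r • a) = r * (s * a) := by simp [smul_eq_mul]; ring
    rw [this]
    exact Ideal.mul_mem_left _ _ hsa

/-- The `m`-th symbolic power: the intersection over the minimal primes `P` of `I` of the
`P`-primary components of `I^m` (contractions of `I^m S_P`). -/
noncomputable def symbolicPower (I : Ideal S) (m : ℕ) : Ideal S :=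
  sInf {J | ∃ P, ∃ h : P ∈ I.minimalPrimes, J = satAtPrime (I ^ m) P h.1.1}


/-! ### Auxiliary lemmas for Statement 11 -/

lemma aux_prod_monomial {k : Type*} [Field k] {σ ι : Type*} (S : Finset ι) (g : ι → (σ →₀ ℕ)) :
    ∏ i ∈ S, (MvPolynomial.monomial (g i) (1:k)) = MvPolynomial.monomial (∑ i ∈ S, g i) 1 := by
  classical
  induction S using Finset.induction with
  | empty => simp
  | insert a S h ih =>
    simp [Finset.prod_insert h, Finset.sum_insert h, ih, MvPolynomial.monomial_mul]

lemma aux_exists_sum_eq {r : ℕ} (c : Fin r → ℕ) (m : ℕ) (h : m ≤ ∑ j, c j) :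
    ∃ a : Fin r → ℕ, (∀ j, a j ≤ c j) ∧ ∑ j, a j = m := by
  classical
  obtain ⟨D, hD⟩ : ∃ D, ∑ j, c j = m + D := ⟨_, (Nat.add_sub_cancel' h).symm⟩
  clear h
  induction D generalizing c with
  | zero => exact ⟨c, fun j => le_rfl, by omega⟩
  | succ D ih =>
    have hpos : ∃ j, c j ≠ 0 := by
      by_contra hall
      push_neg at hall
      have : ∑ j, c j = 0 := Finset.sum_eq_zero fun j _ => hall j
      omega
    obtain ⟨j, hj⟩ := hpos
    set c' : Fin r → ℕ := Function.update c j (c j - 1) with hc'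
    have hsum' : ∑ j', c' j' = m + D := by
      have h1 : ∑ j', c' j' = (c j - 1) + ∑ j' ∈ Finset.univ.erase j, c j' := by
        rw [← Finset.add_sum_erase _ _ (Finset.mem_univ j)]
        congr 1
        · simp [hc']
        · exact Finset.sum_congr rfl fun i hi => by
            simp [hc', Function.update_of_ne (Finset.ne_of_mem_erase hi)]
      have h2 : ∑ j', c j' = c j + ∑ j' ∈ Finset.univ.erase j, c j' := by
        rw [← Finset.add_sum_erase _ _ (Finset.mem_univ j)]
      omega
    obtain ⟨a, ha1, ha2⟩ := ih c' hsum'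
    refine ⟨a, fun j' => ?_, ha2⟩
    by_cases hjj : j' = j
    · subst hjj; have := ha1 j'; simp [hc'] at this; omega
    · have := ha1 j'; simpa [hc', Function.update_of_ne hjj] using this

end Symb
/-- The polarization of `P^m`, `P = (x_{s₁},…,x_{s_r})`, has the stated
irredundant decomposition into monomial primes.  (Polarized variables are indexed by
`Fin n × ℕ` with 0-based slots: the paper's slot `t_j ∈ [1, m]` is `t j < m` here, and
`∑ t_j ≤ m + r − 1` becomes `∑ t j ≤ m − 1`.) -/
theorem statement11 (k : Type*) [Field k] {n r : ℕ} (s : Fin r → Fin n)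
    (hs : Function.Injective s) (m : ℕ) (hm : 0 < m) :
    let T : Set (Fin r → ℕ) := {t | (∀ j, t j < m) ∧ (∑ j, t j) ≤ m - 1}
    let C : (Fin r → ℕ) → Ideal (MvPolynomial (Fin n × ℕ) k) :=
      fun t => Ideal.span (Set.range fun j => (X (s j, t j) : MvPolynomial (Fin n × ℕ) k))
    (Ideal.span {u : MvPolynomial (Fin n × ℕ) k | ∃ a : Fin r → ℕ, (∑ j, a j) = m ∧
        u = ∏ j, ∏ t ∈ Finset.range (a j), X (s j, t)} = ⨅ t ∈ T, C t) ∧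
    ∀ t0 ∈ T, (⨅ t ∈ T \ {t0}, C t) ≠ ⨅ t ∈ T, C t := by
  intro T C
  classical
  -- basic facts
  have hCdef : ∀ t : Fin r → ℕ,
      C t = Ideal.span (Set.range fun j => (X (s j, t j) : MvPolynomial (Fin n × ℕ) k)) :=
    fun t => rfl
  set E : (Fin r → ℕ) → ((Fin n × ℕ) →₀ ℕ) :=
    fun a => ∑ j, ∑ t ∈ Finset.range (a j), Finsupp.single ((s j, t) : Fin n × ℕ) 1 with hE
  have hEapp : ∀ (a : Fin r → ℕ) (p : Fin n × ℕ), E a p =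
      ∑ j, ∑ t ∈ Finset.range (a j), (if ((s j, t) : Fin n × ℕ) = p then 1 else 0) := by
    intro a p
    simp [hE, Finsupp.finset_sum_apply, Finsupp.single_apply]
  have hprod : ∀ a : Fin r → ℕ,
      (∏ j, ∏ t ∈ Finset.range (a j), (X (s j, t) : MvPolynomial (Fin n × ℕ) k)) =
        monomial (E a) 1 := by
    intro a
    rw [hE, ← aux_prod_monomial]
    apply Finset.prod_congr rfl
    intro j _
    rw [← aux_prod_monomial]
    rfl
  have hC : ∀ (t : Fin r → ℕ) (f : MvPolynomial (Fin n × ℕ) k),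
      f ∈ C t ↔ ∀ d ∈ f.support, ∃ j, (d ((s j, t j) : Fin n × ℕ)) ≠ 0 := by
    intro t f
    have h : (Set.range fun j => (X (s j, t j) : MvPolynomial (Fin n × ℕ) k)) =
        X '' Set.range (fun j => ((s j, t j) : Fin n × ℕ)) := by
      rw [← Set.range_comp]; rfl
    rw [hCdef, h, mem_ideal_span_X_image]
    simp
  have hEpos : ∀ (a : Fin r → ℕ) (j0 : Fin r) (t0 : ℕ), t0 < a j0 →
      E a ((s j0, t0) : Fin n × ℕ) ≠ 0 := by
    intro a j0 t0 h
    rw [hEapp]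
    have h1 : (1:ℕ) ≤ ∑ t ∈ Finset.range (a j0),
        (if ((s j0, t) : Fin n × ℕ) = ((s j0, t0) : Fin n × ℕ) then 1 else 0) := by
      have := Finset.single_le_sum
        (f := fun t => if ((s j0, t) : Fin n × ℕ) = ((s j0, t0) : Fin n × ℕ) then (1:ℕ) else 0)
        (fun t _ => Nat.zero_le _) (Finset.mem_range.2 h)
      simpa using this
    have h2 : (∑ t ∈ Finset.range (a j0),
        (if ((s j0, t) : Fin n × ℕ) = ((s j0, t0) : Fin n × ℕ) then (1:ℕ) else 0)) ≤
          ∑ j, ∑ t ∈ Finset.range (a j),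
            (if ((s j, t) : Fin n × ℕ) = ((s j0, t0) : Fin n × ℕ) then (1:ℕ) else 0) := by
      exact Finset.single_le_sum
        (f := fun j => ∑ t ∈ Finset.range (a j),
          (if ((s j, t) : Fin n × ℕ) = ((s j0, t0) : Fin n × ℕ) then (1:ℕ) else 0))
        (fun j _ => Nat.zero_le _) (Finset.mem_univ j0)
    omega
  have hEle : ∀ (a : Fin r → ℕ) (d : (Fin n × ℕ) →₀ ℕ),
      (∀ j t, t < a j → d ((s j, t) : Fin n × ℕ) ≠ 0) → E a ≤ d := by
    intro a d hd
    rw [Finsupp.le_def]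
    intro p
    rw [hEapp]
    by_cases hp : ∃ j t, t < a j ∧ ((s j, t) : Fin n × ℕ) = p
    · obtain ⟨j0, t0, h1, h2⟩ := hp
      have hdp : 1 ≤ d p := by
        rw [← h2]
        exact Nat.one_le_iff_ne_zero.2 (hd j0 t0 h1)
      have hstep : ∀ j : Fin r, (∑ t ∈ Finset.range (a j),
          (if ((s j, t) : Fin n × ℕ) = p then (1:ℕ) else 0)) ≤
            (if s j = p.1 then (1:ℕ) else 0) := by
        intro j
        by_cases hj : s j = p.1
        · have : ∀ t ∈ Finset.range (a j),
              (if ((s j, t) : Fin n × ℕ) = p then (1:ℕ) else 0) =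
                (if t = p.2 then (1:ℕ) else 0) := by
            intro t _
            by_cases ht : t = p.2
            · subst ht
              simp [Prod.ext_iff, hj]
            · rw [if_neg ht, if_neg]
              intro hcon
              exact ht (Prod.ext_iff.1 hcon).2
          rw [Finset.sum_congr rfl this, Finset.sum_ite_eq' (Finset.range (a j)) p.2 (fun _ => 1)]
          split <;> simp [hj]
        · have : ∀ t ∈ Finset.range (a j),
              (if ((s j, t) : Fin n × ℕ) = p then (1:ℕ) else 0) = 0 := by
            intro t _
            rw [if_neg]
            intro hcon
            exact hj (Prod.ext_iff.1 hcon).1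
          rw [Finset.sum_congr rfl this]
          simp
      have hcard : (∑ j : Fin r, (if s j = p.1 then (1:ℕ) else 0)) ≤ 1 := by
        rw [Finset.sum_boole]
        have : (Finset.univ.filter fun j : Fin r => s j = p.1).card ≤ 1 := by
          apply Finset.card_le_one.2
          intro a1 ha1 a2 ha2
          have e1 := (Finset.mem_filter.1 ha1).2
          have e2 := (Finset.mem_filter.1 ha2).2
          exact hs (e1.trans e2.symm)
        exact_mod_cast this
      calc (∑ j : Fin r, ∑ t ∈ Finset.range (a j),
              (if ((s j, t) : Fin n × ℕ) = p then (1:ℕ) else 0))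
          ≤ ∑ j : Fin r, (if s j = p.1 then (1:ℕ) else 0) :=
            Finset.sum_le_sum fun j _ => hstep j
        _ ≤ 1 := hcard
        _ ≤ d p := hdp
    · push_neg at hp
      have : (∑ j : Fin r, ∑ t ∈ Finset.range (a j),
          (if ((s j, t) : Fin n × ℕ) = p then (1:ℕ) else 0)) = 0 := by
        apply Finset.sum_eq_zero
        intro j _
        apply Finset.sum_eq_zero
        intro t ht
        exact if_neg (hp j t (Finset.mem_range.1 ht))
      rw [this]
      exact Nat.zero_le _
  constructor
  · -- the primary decomposition
    apply le_antisymm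
    · rw [Ideal.span_le]
      rintro u ⟨a, ha, rfl⟩
      simp only [SetLike.mem_coe, Submodule.mem_iInf]
      intro t ht
      rw [hC]
      intro d hd
      rw [hprod a, support_monomial] at hd
      simp only [one_ne_zero, if_false, Finset.mem_singleton] at hd
      subst hd
      obtain ⟨ht1, ht2⟩ := ht
      have hex : ∃ j, t j < a j := by
        by_contra hno
        push_neg at hno
        have : m ≤ ∑ j, t j := ha ▸ Finset.sum_le_sum (fun j _ => hno j)
        omega
      obtain ⟨j, hj⟩ := hex
      exact ⟨j, hEpos a j (t j) hj⟩
    · intro f hf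
      simp only [Submodule.mem_iInf] at hf
      rw [← support_sum_monomial_coeff f]
      apply Ideal.sum_mem
      intro d hd
      have hex : ∀ j : Fin r, ∃ t, d ((s j, t) : Fin n × ℕ) = 0 := by
        intro j
        refine ⟨(d.support.sup Prod.snd) + 1, ?_⟩
        by_contra hne
        have hmem := Finsupp.mem_support_iff.2 hne
        have h2 : d.support.sup Prod.snd + 1 ≤ d.support.sup Prod.snd :=
          Finset.le_sup (f := Prod.snd) hmem
        omega
      set c : Fin r → ℕ := fun j => Nat.find (hex j) with hcdef
      have hc0 : ∀ j, d ((s j, c j) : Fin n × ℕ) = 0 := fun j => Nat.find_spec (hex j)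
      have hcpos : ∀ j t, t < c j → d ((s j, t) : Fin n × ℕ) ≠ 0 :=
        fun j t ht => Nat.find_min (hex j) ht
      have hsum : m ≤ ∑ j, c j := by
        by_contra hlt
        push_neg at hlt
        have hcT : c ∈ T := by
          refine ⟨fun j => lt_of_le_of_lt ?_ hlt, by omega⟩
          exact Finset.single_le_sum (fun _ _ => Nat.zero_le _) (Finset.mem_univ j)
        obtain ⟨j, hj⟩ := (hC c f).1 (hf c hcT) d hd
        exact hj (hc0 j)
      obtain ⟨a, ha1, ha2⟩ := aux_exists_sum_eq c m hsum
      have hle : E a ≤ d := hEle a d (fun j t ht => hcpos j t (lt_of_lt_of_le ht (ha1 j)))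
      have hkey : (monomial d (1:k)) ∈ Ideal.span
          {u : MvPolynomial (Fin n × ℕ) k | ∃ a : Fin r → ℕ, (∑ j, a j) = m ∧
            u = ∏ j, ∏ t ∈ Finset.range (a j), X (s j, t)} := by
        have heq : monomial d (1:k) =
            (∏ j, ∏ t ∈ Finset.range (a j), (X (s j, t) : MvPolynomial (Fin n × ℕ) k)) *
              monomial (d - E a) 1 := by
          rw [hprod a, monomial_mul, one_mul, add_tsub_cancel_of_le hle]
        rw [heq]
        exact Ideal.mul_mem_right _ _ (Ideal.subset_span ⟨a, ha2, rfl⟩)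
      have heq2 : (monomial d (coeff d f) : MvPolynomial (Fin n × ℕ) k) =
          MvPolynomial.C (coeff d f) * monomial d 1 := by
        rw [C_mul_monomial, mul_one]
      rw [heq2]
      exact Ideal.mul_mem_left _ _ hkey
  · -- irredundancy
    intro t0 ht0 heq
    set d0 : (Fin n × ℕ) →₀ ℕ :=
      ∑ j, ∑ t ∈ (Finset.range m).erase (t0 j), Finsupp.single ((s j, t) : Fin n × ℕ) 1 with hd0
    have hd0app : ∀ p : Fin n × ℕ, d0 p = ∑ j, ∑ t ∈ (Finset.range m).erase (t0 j),
        (if ((s j, t) : Fin n × ℕ) = p then 1 else 0) := by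
      intro p
      simp [hd0, Finsupp.finset_sum_apply, Finsupp.single_apply]
    have hA : ∀ j, d0 ((s j, t0 j) : Fin n × ℕ) = 0 := by
      intro j
      rw [hd0app]
      apply Finset.sum_eq_zero
      intro j' _
      apply Finset.sum_eq_zero
      intro t ht
      rw [if_neg]
      intro hcon
      have h1 : s j' = s j := (Prod.ext_iff.1 hcon).1
      have h2 : t = t0 j := (Prod.ext_iff.1 hcon).2
      have h3 : j' = j := hs h1
      subst h3
      exact (Finset.mem_erase.1 ht).1 h2
    have hB : ∀ t ∈ T, t ≠ t0 → ∃ j, d0 ((s j, t j) : Fin n × ℕ) ≠ 0 := by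
      intro t ht hne
      obtain ⟨j, hj⟩ := Function.ne_iff.1 hne
      refine ⟨j, ?_⟩
      rw [hd0app]
      have hmem : t j ∈ (Finset.range m).erase (t0 j) :=
        Finset.mem_erase.2 ⟨hj, Finset.mem_range.2 (ht.1 j)⟩
      have h1 : (1:ℕ) ≤ ∑ tt ∈ (Finset.range m).erase (t0 j),
          (if ((s j, tt) : Fin n × ℕ) = ((s j, t j) : Fin n × ℕ) then 1 else 0) := by
        have := Finset.single_le_sum
          (f := fun tt => if ((s j, tt) : Fin n × ℕ) = ((s j, t j) : Fin n × ℕ) then (1:ℕ) else 0)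
          (fun _ _ => Nat.zero_le _) hmem
        simpa using this
      have h2 : (∑ tt ∈ (Finset.range m).erase (t0 j),
          (if ((s j, tt) : Fin n × ℕ) = ((s j, t j) : Fin n × ℕ) then (1:ℕ) else 0)) ≤
            ∑ j', ∑ tt ∈ (Finset.range m).erase (t0 j'),
              (if ((s j', tt) : Fin n × ℕ) = ((s j, t j) : Fin n × ℕ) then (1:ℕ) else 0) := by
        exact Finset.single_le_sum
          (f := fun j' => ∑ tt ∈ (Finset.range m).erase (t0 j'),
            (if ((s j', tt) : Fin n × ℕ) = ((s j, t j) : Fin n × ℕ) then (1:ℕ) else 0))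
          (fun _ _ => Nat.zero_le _) (Finset.mem_univ j)
      omega
    have hsupp : (monomial d0 (1:k)).support = {d0} := by
      rw [support_monomial]
      simp
    have hw1 : (monomial d0 (1:k)) ∈ ⨅ t ∈ T \ {t0}, C t := by
      simp only [Submodule.mem_iInf]
      intro t ht
      rw [hC]
      intro d hd
      rw [hsupp, Finset.mem_singleton] at hd
      subst hd
      exact hB t ht.1 ht.2
    rw [heq] at hw1
    have hle0 : (⨅ t ∈ T, C t) ≤ C t0 := biInf_le C ht0
    have hw2 := hle0 hw1
    rw [hC] at hw2
    obtain ⟨j, hj⟩ := hw2 d0 (by rw [hsupp]; exact Finset.mem_singleton_self _)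
    exact hj (hA j)
end

section
/- Let Δ be a matroid on [n] with all facets of Δ^c of size r, and m a positive integer. Then the ideal J generated by all monomials x_{i₁,a₁}⋯x_{i_r,a_r} with {i₁,...,i_r} a facet of Δ^c, 1 ≤ a_j ≤ m, and a₁ + ⋯ + a_r ≤ m + r − 1, in the polynomial ring k[x_{i,a} : 1 ≤ i ≤ n, 1 ≤ a ≤ m], has linear quotients. -/
open MvPolynomial

section LQAux

variable {n : ℕ} {Δ : Set (Finset (Fin n))}

theorem lq_facets_nonempty (h : IsSimplicialComplex Δ) : (facets Δ).Nonempty := by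
  obtain ⟨F0, hF0, hmax⟩ := Set.Finite.exists_maximalFor Finset.card Δ (Set.toFinite Δ) h.1
  exact ⟨F0, hF0, fun G hG hsub => Finset.eq_of_subset_of_card_le hsub
    (hmax hG (Finset.card_le_card hsub))⟩

theorem lq_card_le (hM : IsMatroidComplex Δ) {F0 : Finset (Fin n)} (hF0 : F0 ∈ facets Δ)
    {G : Finset (Fin n)} (hG : G ∈ Δ) : G.card ≤ F0.card := by
  by_contra hlt
  push_neg at hlt
  obtain ⟨i, hi, hins⟩ := hM.2 F0 hF0.1 G hG hlt
  rw [Finset.mem_sdiff] at hi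
  have h2 := hF0.2 _ hins (Finset.subset_insert i F0)
  have : i ∈ F0 := by rw [h2]; exact Finset.mem_insert_self i F0
  exact hi.2 this

theorem lq_fullcard_facet (hM : IsMatroidComplex Δ) {F0 : Finset (Fin n)}
    (hF0 : F0 ∈ facets Δ) {F : Finset (Fin n)} (hF : F ∈ Δ) (hcard : F.card = F0.card) :
    F ∈ facets Δ := by
  refine ⟨hF, fun G hG hsub => Finset.eq_of_subset_of_card_le hsub ?_⟩
  rw [hcard]
  exact lq_card_le hM hF0 hG

theorem lq_pure (hM : IsMatroidComplex Δ) {F G : Finset (Fin n)} (hF : F ∈ facets Δ)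
    (hG : G ∈ facets Δ) : F.card = G.card :=
  le_antisymm (lq_card_le hM hG hF.1) (lq_card_le hM hF hG.1)

theorem lq_coexchange (hM : IsMatroidComplex Δ) {A A' : Finset (Fin n)}
    (hA : A ∈ facets Δ) (hA' : A' ∈ facets Δ) {q : Fin n} (hq : q ∈ A' \ A) :
    ∃ p ∈ A \ A', insert q (A.erase p) ∈ facets Δ := by
  classical
  rw [Finset.mem_sdiff] at hq
  set 𝒮 : Set (Finset (Fin n)) := {B | B ∈ facets Δ ∧ q ∈ B ∧ A ∩ A' ⊆ B} with h𝒮def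
  have h𝒮 : A' ∈ 𝒮 := ⟨hA', hq.1, Finset.inter_subset_right⟩
  obtain ⟨B, hB, hmin⟩ := Set.Finite.exists_minimalFor (fun B => (A \ B).card) 𝒮
    (Set.toFinite 𝒮) ⟨A', h𝒮⟩
  obtain ⟨hBf, hqB, hAA'⟩ := hB
  -- B \ A = {q}
  have hBA : B \ A = {q} := by
    have hsub : B \ A ⊆ {q} := by
      intro x hx
      rw [Finset.mem_sdiff] at hx
      rw [Finset.mem_singleton]
      by_contra hxq
      -- build a better B'
      have herase : B.erase x ∈ Δ := hM.1.2 B hBf.1 _ (Finset.erase_subset x B)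
      have hcardB : B.card = A.card := lq_pure hM hBf hA
      have hxB := hx.1
      have hlt : (B.erase x).card < A.card := by
        have h0 : 0 < B.card := Finset.card_pos.2 ⟨x, hxB⟩
        rw [Finset.card_erase_of_mem hxB, hcardB]
        omega
      obtain ⟨y, hy, hins⟩ := hM.2 _ herase A hA.1 hlt
      rw [Finset.mem_sdiff] at hy
      set B' := insert y (B.erase x) with hB'def
      have hyx : y ≠ x := fun h => hx.2 (h ▸ hy.1)
      have hyB : y ∉ B := fun h => hy.2 (Finset.mem_erase.2 ⟨hyx, h⟩)
      have hcardB' : B'.card = A.card := by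
        rw [hB'def, Finset.card_insert_of_notMem hy.2, Finset.card_erase_of_mem hxB, hcardB]
        have : 0 < A.card := Finset.card_pos.2 ⟨y, hy.1⟩
        omega
      have hB'f : B' ∈ facets Δ := lq_fullcard_facet hM hA hins hcardB'
      have hB'𝒮 : B' ∈ 𝒮 := by
        refine ⟨hB'f, ?_, ?_⟩
        · exact Finset.mem_insert_of_mem (Finset.mem_erase.2 ⟨fun h => hxq h.symm, hqB⟩)
        · intro z hz
          have hzA : z ∈ A := (Finset.mem_inter.1 hz).1
          have hzx : z ≠ x := fun h => hx.2 (h ▸ hzA)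
          exact Finset.mem_insert_of_mem (Finset.mem_erase.2 ⟨hzx, hAA' hz⟩)
      have hAB' : A \ B' = (A \ B).erase y := by
        ext z
        constructor
        · intro hz
          rw [Finset.mem_sdiff] at hz
          have hzA := hz.1
          have hzB' := hz.2
          have hzy : z ≠ y := fun h => hzB' (h ▸ Finset.mem_insert_self y _)
          have hzx : z ≠ x := fun h => hx.2 (h ▸ hzA)
          have hzB : z ∉ B := fun h => hzB' (Finset.mem_insert_of_mem (Finset.mem_erase.2 ⟨hzx, h⟩))
          exact Finset.mem_erase.2 ⟨hzy, Finset.mem_sdiff.2 ⟨hzA, hzB⟩⟩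
        · intro hz
          rw [Finset.mem_erase, Finset.mem_sdiff] at hz
          refine Finset.mem_sdiff.2 ⟨hz.2.1, fun hzB' => ?_⟩
          rcases Finset.mem_insert.1 hzB' with h | h
          · exact hz.1 h
          · exact hz.2.2 (Finset.erase_subset x B h)
      have hltcard : (A \ B').card < (A \ B).card := by
        rw [hAB']
        have hyAB : y ∈ A \ B := Finset.mem_sdiff.2 ⟨hy.1, hyB⟩
        rw [Finset.card_erase_of_mem hyAB]
        exact Nat.sub_lt (Finset.card_pos.2 ⟨y, hyAB⟩) one_pos
      have : (A \ B).card ≤ (A \ B').card := hmin hB'𝒮 (le_of_lt hltcard)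
      omega
    have hqBA : q ∈ B \ A := Finset.mem_sdiff.2 ⟨hqB, hq.2⟩
    exact Finset.Subset.antisymm hsub (Finset.singleton_subset_iff.2 hqBA)
  -- A \ B = {p}
  have hcardAB : (A \ B).card = 1 := by
    rw [Finset.card_sdiff_comm (lq_pure hM hA hBf), hBA, Finset.card_singleton]
  obtain ⟨p, hp⟩ := Finset.card_eq_one.1 hcardAB
  have hpA : p ∈ A ∧ p ∉ B := by
    have : p ∈ A \ B := hp ▸ Finset.mem_singleton_self p
    exact Finset.mem_sdiff.1 this
  refine ⟨p, Finset.mem_sdiff.2 ⟨hpA.1, fun hpA' => hpA.2 (hAA' (Finset.mem_inter.2 ⟨hpA.1, hpA'⟩))⟩, ?_⟩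
  have hBeq : insert q (A.erase p) = B := by
    ext z
    simp only [Finset.mem_insert, Finset.mem_erase]
    constructor
    · rintro (rfl | ⟨hzp, hzA⟩)
      · exact hqB
      · by_contra hzB
        have : z ∈ A \ B := Finset.mem_sdiff.2 ⟨hzA, hzB⟩
        rw [hp, Finset.mem_singleton] at this
        exact hzp this
    · intro hzB
      by_cases hzq : z = q
      · exact Or.inl hzq
      · refine Or.inr ⟨?_, ?_⟩
        · exact fun h => hpA.2 (h ▸ hzB)
        · by_contra hzA
          have : z ∈ B \ A := Finset.mem_sdiff.2 ⟨hzB, hzA⟩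
          rw [hBA, Finset.mem_singleton] at this
          exact hzq this
  rw [hBeq]
  exact hBf

end LQAux

section LQAux2

variable {n : ℕ} {Δ : Set (Finset (Fin n))}

theorem lq_facets_compl (hM : IsMatroidComplex Δ) :
    facets (complementComplex Δ) = {B | ∃ A ∈ facets Δ, B = Aᶜ} := by
  ext B
  constructor
  · rintro ⟨⟨A, hA, hBA⟩, hmax⟩
    exact ⟨A, hA, hmax _ ⟨A, hA, subset_rfl⟩ hBA⟩
  · rintro ⟨A, hA, rfl⟩
    refine ⟨⟨A, hA, subset_rfl⟩, ?_⟩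
    rintro G ⟨A', hA', hGA'⟩ hsub
    refine Finset.eq_of_subset_of_card_le hsub (le_trans (Finset.card_le_card hGA') ?_)
    rw [Finset.card_compl, Finset.card_compl, lq_pure hM hA hA']

theorem lq_coexchange_c (hM : IsMatroidComplex Δ) {B B' : Finset (Fin n)}
    (hB : B ∈ facets (complementComplex Δ)) (hB' : B' ∈ facets (complementComplex Δ))
    {q : Fin n} (hq : q ∈ B \ B') :
    ∃ p ∈ B' \ B, insert p (B.erase q) ∈ facets (complementComplex Δ) := by
  rw [lq_facets_compl hM] at hB hB' ⊢
  obtain ⟨A, hA, rfl⟩ := hB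
  obtain ⟨A', hA', rfl⟩ := hB'
  rw [Finset.mem_sdiff, Finset.mem_compl, Finset.mem_compl, not_not] at hq
  obtain ⟨p, hp, hfac⟩ := lq_coexchange hM hA hA' (Finset.mem_sdiff.2 ⟨hq.2, hq.1⟩)
  rw [Finset.mem_sdiff] at hp
  refine ⟨p, ?_, ?_⟩
  · rw [Finset.mem_sdiff, Finset.mem_compl, Finset.mem_compl, not_not]
    exact ⟨hp.2, hp.1⟩
  · refine ⟨insert q (A.erase p), hfac, ?_⟩
    rw [Finset.compl_insert, Finset.compl_erase]
    rw [Finset.erase_insert_of_ne]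
    · exact fun h => hq.1 (h ▸ hp.1)

/-! ### encoding and weights -/

def lqEnc (n : ℕ) (s : Fin n × ℕ) : ℕ := n * s.2 + s.1.val

theorem lqEnc_inj : Function.Injective (lqEnc n) := by
  rintro ⟨i, a⟩ ⟨j, b⟩ h
  simp only [lqEnc] at h
  have hn : 0 < n := i.pos
  have hi : i.val < n := i.isLt
  have hj : j.val < n := j.isLt
  have hab : a = b := by
    rcases Nat.lt_trichotomy a b with h' | h' | h'
    · nlinarith
    · exact h'
    · nlinarith
  subst hab
  have : i.val = j.val := by omega
  exact Prod.ext (Fin.ext this) rfl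

def lqW (n : ℕ) (S : Finset (Fin n × ℕ)) : ℕ := ∑ s ∈ S, 2 ^ lqEnc n s

theorem lq_geom (E : ℕ) : ∑ i ∈ Finset.range E, 2 ^ i < 2 ^ E := by
  induction E with
  | zero => simp
  | succ E ih =>
    rw [Finset.sum_range_succ, pow_succ]
    omega

theorem lq_sum_pow_lt {S : Finset (Fin n × ℕ)} {E : ℕ} (hE : ∀ s ∈ S, lqEnc n s < E) :
    ∑ s ∈ S, 2 ^ lqEnc n s < 2 ^ E := by
  classical
  calc ∑ s ∈ S, 2 ^ lqEnc n s = ∑ i ∈ S.image (lqEnc n), 2 ^ i := by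
        rw [Finset.sum_image (fun x _ y _ h => lqEnc_inj h)]
    _ ≤ ∑ i ∈ Finset.range E, 2 ^ i := Finset.sum_le_sum_of_subset (by
        intro i hi
        obtain ⟨s, hs, rfl⟩ := Finset.mem_image.1 hi
        exact Finset.mem_range.2 (hE s hs))
    _ < 2 ^ E := lq_geom E

theorem lq_W_lt {S T : Finset (Fin n × ℕ)} {v : Fin n × ℕ} (hvT : v ∈ T) (hvS : v ∉ S)
    (hmax : ∀ s ∈ S, s ∉ T → lqEnc n s < lqEnc n v) : lqW n S < lqW n T := by
  classical
  have hS : lqW n S = ∑ s ∈ S ∩ T, 2 ^ lqEnc n s + ∑ s ∈ S \ T, 2 ^ lqEnc n s :=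
    (Finset.sum_inter_add_sum_sdiff S T _).symm
  have hT : lqW n T = ∑ s ∈ T ∩ S, 2 ^ lqEnc n s + ∑ s ∈ T \ S, 2 ^ lqEnc n s :=
    (Finset.sum_inter_add_sum_sdiff T S _).symm
  have h1 : ∑ s ∈ S \ T, 2 ^ lqEnc n s < 2 ^ lqEnc n v :=
    lq_sum_pow_lt (fun s hs => by
      rw [Finset.mem_sdiff] at hs; exact hmax s hs.1 hs.2)
  have h2 : 2 ^ lqEnc n v ≤ ∑ s ∈ T \ S, 2 ^ lqEnc n s :=
    Finset.single_le_sum (f := fun s => 2 ^ lqEnc n s) (fun s _ => Nat.zero_le _) (Finset.mem_sdiff.2 ⟨hvT, hvS⟩)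
  have h3 : ∑ s ∈ S ∩ T, 2 ^ lqEnc n s = ∑ s ∈ T ∩ S, 2 ^ lqEnc n s := by
    rw [Finset.inter_comm]
  omega

theorem lq_W_lt_or {S T : Finset (Fin n × ℕ)} (hne : S ≠ T) :
    lqW n S < lqW n T ∨ lqW n T < lqW n S := by
  classical
  have hD : ((S \ T) ∪ (T \ S)).Nonempty := by
    rw [Finset.nonempty_iff_ne_empty]
    intro h
    rw [Finset.union_eq_empty] at h
    exact hne (Finset.Subset.antisymm (Finset.sdiff_eq_empty_iff_subset.1 h.1)
      (Finset.sdiff_eq_empty_iff_subset.1 h.2))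
  obtain ⟨v, hvD, hvmax⟩ := Finset.exists_max_image _ (lqEnc n) hD
  have hstrict : ∀ s, s ∈ (S \ T) ∪ (T \ S) → s ≠ v → lqEnc n s < lqEnc n v := by
    intro s hs hsv
    exact lt_of_le_of_ne (hvmax s hs) (fun h => hsv (lqEnc_inj h))
  rcases Finset.mem_union.1 hvD with hv | hv
  · rw [Finset.mem_sdiff] at hv
    refine Or.inr (lq_W_lt hv.1 hv.2 (fun s hsT hsS => ?_))
    have hsD : s ∈ (S \ T) ∪ (T \ S) := Finset.mem_union_right _ (Finset.mem_sdiff.2 ⟨hsT, hsS⟩)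
    exact hstrict s hsD (fun h => hv.2 (h ▸ hsT))
  · rw [Finset.mem_sdiff] at hv
    refine Or.inl (lq_W_lt hv.1 hv.2 (fun s hsS hsT => ?_))
    have hsD : s ∈ (S \ T) ∪ (T \ S) := Finset.mem_union_left _ (Finset.mem_sdiff.2 ⟨hsS, hsT⟩)
    exact hstrict s hsD (fun h => hv.2 (h ▸ hsS))

theorem lq_W_inj {S T : Finset (Fin n × ℕ)} (h : lqW n S = lqW n T) : S = T := by
  by_contra hne
  rcases lq_W_lt_or hne with h' | h' <;> omega

end LQAux2

section LQAux3

variable {n : ℕ}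

/-- The variable sets of the generators. -/
def lqGen (Δ : Set (Finset (Fin n))) (r m : ℕ) : Set (Finset (Fin n × ℕ)) :=
  {S | S.image Prod.fst ∈ facets (complementComplex Δ) ∧
       (∀ s ∈ S, ∀ t ∈ S, s.1 = t.1 → s = t) ∧
       (∀ s ∈ S, 1 ≤ s.2 ∧ s.2 ≤ m) ∧ ∑ s ∈ S, s.2 ≤ m + r - 1}

variable {Δ : Set (Finset (Fin n))} {r m : ℕ}

theorem lqGen_finite : (lqGen Δ r m).Finite := by
  classical
  apply Set.Finite.subset (Finset.univ ×ˢ Finset.range (m + 1)).powerset.finite_toSet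
  intro S hS
  rw [Finset.mem_coe, Finset.mem_powerset]
  intro s hs
  rw [Finset.mem_product, Finset.mem_range]
  exact ⟨Finset.mem_univ _, Nat.lt_succ_of_le ((hS.2.2.1 s hs).2)⟩

theorem lqGen_card (hr : ∀ F ∈ facets (complementComplex Δ), F.card = r)
    {S : Finset (Fin n × ℕ)} (hS : S ∈ lqGen Δ r m) : S.card = r := by
  classical
  have h1 : (S.image Prod.fst).card = S.card :=
    Finset.card_image_of_injOn (fun s hs t ht h => hS.2.1 s hs t ht h)
  rw [← h1, hr _ hS.1]

theorem lq_swap {S : Finset (Fin n × ℕ)} (hS : S ∈ lqGen Δ r m) {q p : Fin n} {c b : ℕ}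
    (hqc : (q, c) ∈ S) (hb1 : 1 ≤ b) (hbm : b ≤ m)
    (henc : lqEnc n (p, b) < lqEnc n (q, c))
    (hpF : insert p ((S.image Prod.fst).erase q) ∈ facets (complementComplex Δ))
    (hp : p ∉ S.image Prod.fst ∨ p = q) :
    insert (p, b) (S.erase (q, c)) ∈ lqGen Δ r m ∧
      lqW n (insert (p, b) (S.erase (q, c))) < lqW n S ∧ (p, b) ∉ S := by
  classical
  obtain ⟨hface, hinj, hbnd, hsum⟩ := hS
  have hnpos : 0 < n := q.pos
  have hbc : b ≤ c := by
    simp only [lqEnc] at henc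
    have hpn : p.val < n := p.isLt
    have hqn : q.val < n := q.isLt
    nlinarith
  have hpbS : (p, b) ∉ S := by
    intro hmem
    rcases hp with hp | rfl
    · exact hp (Finset.mem_image_of_mem Prod.fst hmem)
    · have := hinj _ hmem _ hqc rfl
      rw [Prod.mk.injEq] at this
      have hbceq : b = c := this.2
      subst hbceq
      exact lt_irrefl _ henc
  have hpbE : (p, b) ∉ S.erase (q, c) := fun h => hpbS (Finset.erase_subset _ _ h)
  have himg : (S.erase (q, c)).image Prod.fst = (S.image Prod.fst).erase q := by
    ext i
    constructor
    · intro hi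
      obtain ⟨s, hs, rfl⟩ := Finset.mem_image.1 hi
      rw [Finset.mem_erase] at hs
      refine Finset.mem_erase.2 ⟨?_, Finset.mem_image_of_mem _ hs.2⟩
      intro h
      exact hs.1 (hinj _ hs.2 _ hqc h)
    · intro hi
      rw [Finset.mem_erase] at hi
      obtain ⟨s, hs, rfl⟩ := Finset.mem_image.1 hi.2
      refine Finset.mem_image_of_mem _ (Finset.mem_erase.2 ⟨?_, hs⟩)
      intro h
      exact hi.1 (by rw [h])
  have himg2 : (insert (p, b) (S.erase (q, c))).image Prod.fst =
      insert p ((S.image Prod.fst).erase q) := by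
    rw [Finset.image_insert, himg]
  have hsum1 : ∑ s ∈ S.erase (q, c), s.2 + c = ∑ s ∈ S, s.2 := by
    have := Finset.sum_erase_add S (fun s => s.2) hqc
    simpa using this
  have hsum2 : ∑ s ∈ insert (p, b) (S.erase (q, c)), s.2
      = b + ∑ s ∈ S.erase (q, c), s.2 := by
    rw [Finset.sum_insert hpbE]
  refine ⟨⟨himg2 ▸ hpF, ?_, ?_, ?_⟩, ?_, hpbS⟩
  · -- injectivity on fst
    intro s hs t ht hst
    rcases Finset.mem_insert.1 hs with rfl | hs' <;> rcases Finset.mem_insert.1 ht with rfl | ht'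
    · rfl
    · exfalso
      have htS : t ∈ S := Finset.erase_subset _ _ ht'
      rcases hp with hp | rfl
      · exact hp (by rw [show p = t.1 from hst]; exact Finset.mem_image_of_mem Prod.fst htS)
      · have := hinj _ htS _ hqc hst.symm
        rw [Finset.mem_erase] at ht'
        exact ht'.1 this
    · exfalso
      have hsS : s ∈ S := Finset.erase_subset _ _ hs'
      rcases hp with hp | rfl
      · exact hp (by rw [← show s.1 = p from hst]; exact Finset.mem_image_of_mem Prod.fst hsS)
      · have := hinj _ hsS _ hqc hst
        rw [Finset.mem_erase] at hs'
        exact hs'.1 this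
    · exact hinj _ (Finset.erase_subset _ _ hs') _ (Finset.erase_subset _ _ ht') hst
  · -- bounds
    intro s hs
    rcases Finset.mem_insert.1 hs with rfl | hs'
    · exact ⟨hb1, hbm⟩
    · exact hbnd _ (Finset.erase_subset _ _ hs')
  · -- sum bound
    omega
  · -- weight decreases
    have hW1 : lqW n (S.erase (q, c)) + 2 ^ lqEnc n (q, c) = lqW n S :=
      Finset.sum_erase_add S _ hqc
    have hW2 : lqW n (insert (p, b) (S.erase (q, c)))
        = 2 ^ lqEnc n (p, b) + lqW n (S.erase (q, c)) := Finset.sum_insert hpbE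
    have hpow : 2 ^ lqEnc n (p, b) < 2 ^ lqEnc n (q, c) :=
      Nat.pow_lt_pow_right one_lt_two henc
    omega

theorem lq_exchange (hM : IsMatroidComplex Δ)
    {S S' : Finset (Fin n × ℕ)} (hS : S ∈ lqGen Δ r m) (hS' : S' ∈ lqGen Δ r m)
    (hW : lqW n S' < lqW n S) :
    ∃ s' ∈ S', s' ∉ S ∧ ∃ S'' ∈ lqGen Δ r m, lqW n S'' < lqW n S ∧ S'' ⊆ insert s' S := by
  classical
  have hne : S ≠ S' := fun h => by rw [h] at hW; exact lt_irrefl _ hW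
  have hD : ((S \ S') ∪ (S' \ S)).Nonempty := by
    rw [Finset.nonempty_iff_ne_empty]
    intro h
    rw [Finset.union_eq_empty] at h
    exact hne (Finset.Subset.antisymm (Finset.sdiff_eq_empty_iff_subset.1 h.1)
      (Finset.sdiff_eq_empty_iff_subset.1 h.2))
  obtain ⟨v, hvD, hvmax⟩ := Finset.exists_max_image _ (lqEnc n) hD
  have hstrict : ∀ s, s ∈ (S \ S') ∪ (S' \ S) → s ≠ v → lqEnc n s < lqEnc n v :=
    fun s hs hsv => lt_of_le_of_ne (hvmax s hs) (fun h => hsv (lqEnc_inj h))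
  -- v must lie in S \ S'
  have hvS : v ∈ S ∧ v ∉ S' := by
    rcases Finset.mem_union.1 hvD with hv | hv
    · exact Finset.mem_sdiff.1 hv
    · exfalso
      rw [Finset.mem_sdiff] at hv
      have : lqW n S < lqW n S' := lq_W_lt hv.1 hv.2 (fun s hsS hsS' =>
        hstrict s (Finset.mem_union_left _ (Finset.mem_sdiff.2 ⟨hsS, hsS'⟩))
          (fun h => hv.2 (h ▸ hsS)))
      omega
  have hqF : v.1 ∈ S.image Prod.fst := Finset.mem_image_of_mem Prod.fst hvS.1
  have key : ∃ t ∈ S', t ∉ S ∧ lqEnc n t < lqEnc n v ∧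
      insert t.1 ((S.image Prod.fst).erase v.1) ∈ facets (complementComplex Δ) ∧
      (t.1 ∉ S.image Prod.fst ∨ t.1 = v.1) := by
    by_cases hqG : v.1 ∈ S'.image Prod.fst
    · obtain ⟨t, htS', hfst⟩ := Finset.mem_image.1 hqG
      have htne : t ∉ S := by
        intro htS
        have := hS.2.1 _ htS _ hvS.1 hfst
        rw [this] at htS'
        exact hvS.2 htS'
      have htv : t ≠ v := fun h => hvS.2 (h ▸ htS')
      have henc : lqEnc n t < lqEnc n v := hstrict t
        (Finset.mem_union_right _ (Finset.mem_sdiff.2 ⟨htS', htne⟩)) htv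
      refine ⟨t, htS', htne, henc, ?_, Or.inr hfst⟩
      rw [hfst, Finset.insert_erase hqF]
      exact hS.1
    · obtain ⟨p, hpmem, hins⟩ := lq_coexchange_c hM hS.1 hS'.1
        (Finset.mem_sdiff.2 ⟨hqF, hqG⟩)
      rw [Finset.mem_sdiff] at hpmem
      obtain ⟨t, htS', hfst⟩ := Finset.mem_image.1 hpmem.1
      have htne : t ∉ S := fun htS => hpmem.2 (hfst ▸ Finset.mem_image_of_mem Prod.fst htS)
      have htv : t ≠ v := fun h => hvS.2 (h ▸ htS')
      have henc : lqEnc n t < lqEnc n v := hstrict t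
        (Finset.mem_union_right _ (Finset.mem_sdiff.2 ⟨htS', htne⟩)) htv
      exact ⟨t, htS', htne, henc, hfst ▸ hins, Or.inl (hfst ▸ hpmem.2)⟩
  obtain ⟨t, htS', htne, henc, hins, hp⟩ := key
  have htb := hS'.2.2.1 t htS'
  obtain ⟨q, c⟩ := v
  have hswap := lq_swap hS hvS.1 htb.1 htb.2
    (show lqEnc n (t.1, t.2) < lqEnc n (q, c) from henc) hins hp
  refine ⟨t, htS', htne, insert (t.1, t.2) (S.erase (q, c)), hswap.1, hswap.2.1, ?_⟩
  exact Finset.insert_subset_insert _ (Finset.erase_subset _ _)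

end LQAux3

section LQAux4

variable {n : ℕ}

noncomputable def lqD (S : Finset (Fin n × ℕ)) : (Fin n × ℕ) →₀ ℕ :=
  ∑ s ∈ S, Finsupp.single s 1

theorem lqD_apply (S : Finset (Fin n × ℕ)) (t : Fin n × ℕ) :
    lqD S t = if t ∈ S then 1 else 0 := by
  classical
  rw [lqD, Finsupp.finset_sum_apply]
  simp only [Finsupp.single_apply]
  exact Finset.sum_ite_eq' S t (fun _ => 1)

theorem lqD_mono {S T : Finset (Fin n × ℕ)} (h : S ⊆ T) : lqD S ≤ lqD T := by
  rw [Finsupp.le_def]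
  intro t
  rw [lqD_apply, lqD_apply]
  by_cases ht : t ∈ S
  · rw [if_pos ht, if_pos (h ht)]
  · rw [if_neg ht]
    exact Nat.zero_le _

theorem lqD_inj {S T : Finset (Fin n × ℕ)} (h : lqD S = lqD T) : S = T := by
  ext t
  have := DFunLike.congr_fun h t
  simp only [lqD_apply] at this
  by_cases htS : t ∈ S <;> by_cases htT : t ∈ T <;> simp_all

variable {k : Type*} [Field k]

theorem lqMono_eq (S : Finset (Fin n × ℕ)) :
    ∏ s ∈ S, (X s : MvPolynomial (Fin n × ℕ) k) = monomial (lqD S) 1 := by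
  classical
  induction S using Finset.induction_on with
  | empty => simp [lqD]
  | @insert a S ha ih =>
    rw [Finset.prod_insert ha, ih]
    have hX : (X a : MvPolynomial (Fin n × ℕ) k) = monomial (Finsupp.single a 1) 1 := rfl
    rw [hX, monomial_mul, one_mul]
    congr 1
    rw [lqD, lqD, Finset.sum_insert ha]

theorem lqX_mul {S : Finset (Fin n × ℕ)} {s : Fin n × ℕ} (hs : s ∉ S) :
    (X s : MvPolynomial (Fin n × ℕ) k) * monomial (lqD S) 1 = monomial (lqD (insert s S)) 1 := by
  rw [← lqMono_eq, ← lqMono_eq, Finset.prod_insert hs]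

theorem lq_stmt_eq {Δ : Set (Finset (Fin n))} {r m : ℕ}
    (hr : ∀ F ∈ facets (complementComplex Δ), F.card = r) :
    {u : MvPolynomial (Fin n × ℕ) k |
      ∃ (f : Fin r → Fin n) (a : Fin r → ℕ), Function.Injective f ∧
        Finset.univ.image f ∈ facets (complementComplex Δ) ∧
        (∀ j, 1 ≤ a j ∧ a j ≤ m) ∧ (∑ j, a j) ≤ m + r - 1 ∧
        u = ∏ j, X (f j, a j)} =
      (fun S => (monomial (lqD S) (1 : k))) '' lqGen Δ r m := by
  classical
  ext u
  constructor
  · rintro ⟨f, a, hfinj, hface, hbnd, hsum, rfl⟩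
    set g : Fin r → Fin n × ℕ := fun j => (f j, a j) with hg
    have hginj : ∀ x ∈ Finset.univ, ∀ y ∈ Finset.univ, g x = g y → x = y :=
      fun x _ y _ h => hfinj (congrArg Prod.fst h)
    refine ⟨Finset.univ.image g, ⟨?_, ?_, ?_, ?_⟩, ?_⟩
    · have hfg : Prod.fst ∘ g = f := rfl
      rw [Finset.image_image, hfg]
      exact hface
    · intro s hs t ht hst
      obtain ⟨i, _, rfl⟩ := Finset.mem_image.1 hs
      obtain ⟨j, _, rfl⟩ := Finset.mem_image.1 ht
      rw [hfinj (hst : f i = f j)]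
    · intro s hs
      obtain ⟨j, _, rfl⟩ := Finset.mem_image.1 hs
      exact hbnd j
    · rw [Finset.sum_image hginj]
      exact hsum
    · have hbeta : (fun S => (monomial (lqD S) (1 : k))) (Finset.univ.image g)
          = ∏ s ∈ Finset.univ.image g, (X s : MvPolynomial (Fin n × ℕ) k) :=
        (lqMono_eq _).symm
      rw [hbeta, Finset.prod_image hginj]
  · rintro ⟨S, hS, rfl⟩
    have hcard : S.card = r := lqGen_card hr hS
    set e := Finset.equivFinOfCardEq hcard with he
    set g : Fin r → Fin n × ℕ := fun j => (e.symm j : Fin n × ℕ) with hg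
    have hgS : ∀ j, g j ∈ S := fun j => (e.symm j).2
    have hginj : Function.Injective g := fun i j h =>
      e.symm.injective (Subtype.ext h)
    have hginj' : ∀ x ∈ Finset.univ, ∀ y ∈ Finset.univ, g x = g y → x = y :=
      fun x _ y _ h => hginj h
    have himg : Finset.univ.image g = S := by
      ext s
      rw [Finset.mem_image]
      constructor
      · rintro ⟨j, _, rfl⟩
        exact hgS j
      · intro hs
        refine ⟨e ⟨s, hs⟩, Finset.mem_univ _, ?_⟩
        rw [hg]
        simp only [Equiv.symm_apply_apply]
    refine ⟨fun j => (g j).1, fun j => (g j).2, ?_, ?_, ?_, ?_, ?_⟩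
    · intro i j h
      exact hginj (hS.2.1 _ (hgS i) _ (hgS j) h)
    · have h1 : Finset.univ.image (fun j => (g j).1) = (Finset.univ.image g).image Prod.fst := by
        rw [Finset.image_image]
        rfl
      rw [h1, himg]
      exact hS.1
    · intro j
      exact hS.2.2.1 _ (hgS j)
    · calc ∑ j, (g j).2 = ∑ s ∈ Finset.univ.image g, s.2 := (Finset.sum_image hginj').symm
        _ ≤ m + r - 1 := by rw [himg]; exact hS.2.2.2
    · show (monomial (lqD S) (1 : k)) = ∏ j, (X ((g j).1, (g j).2) : MvPolynomial (Fin n × ℕ) k)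
      have h2 : ∀ j, ((g j).1, (g j).2) = g j := fun j => rfl
      calc (monomial (lqD S) (1 : k)) = ∏ s ∈ S, (X s : MvPolynomial (Fin n × ℕ) k) :=
            (lqMono_eq S).symm
        _ = ∏ s ∈ Finset.univ.image g, (X s : MvPolynomial (Fin n × ℕ) k) := by rw [himg]
        _ = ∏ j, (X (g j) : MvPolynomial (Fin n × ℕ) k) := Finset.prod_image hginj'
        _ = ∏ j, (X ((g j).1, (g j).2) : MvPolynomial (Fin n × ℕ) k) := by
            simp only [h2]

/-- The sorting relation: compare weights. -/
def lqR (n : ℕ) : Finset (Fin n × ℕ) → Finset (Fin n × ℕ) → Prop :=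
  fun S T => lqW n S ≤ lqW n T

instance : DecidableRel (lqR n) := fun _ _ => Nat.decLe _ _
instance : IsTotal (Finset (Fin n × ℕ)) (lqR n) := ⟨fun _ _ => Nat.le_total _ _⟩
instance : IsTrans (Finset (Fin n × ℕ)) (lqR n) := ⟨fun _ _ _ => Nat.le_trans⟩
instance : IsRefl (Finset (Fin n × ℕ)) (lqR n) := ⟨fun _ => Nat.le_refl _⟩
instance : IsAntisymm (Finset (Fin n × ℕ)) (lqR n) :=
  ⟨fun _ _ h1 h2 => lq_W_inj (Nat.le_antisymm h1 h2)⟩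

end LQAux4


/-- For a matroid `Δ` with all facets of `Δᶜ` of size `r`, the Alexander
dual of the polarized `m`-th symbolic power (the ideal generated by the monomials
`x_{i₁,a₁}⋯x_{i_r,a_r}` with `{i₁,…,i_r} ∈ F(Δᶜ)`, `1 ≤ a_j ≤ m`,
`∑ a_j ≤ m + r − 1`) has linear quotients. -/
theorem statement12 (k : Type*) [Field k] {n : ℕ} (Δ : Set (Finset (Fin n)))
    (hM : IsMatroidComplex Δ) (r m : ℕ) (hm : 0 < m)
    (hr : ∀ F ∈ facets (complementComplex Δ), F.card = r) :
    HasLinearQuotients k (Ideal.span {u : MvPolynomial (Fin n × ℕ) k |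
      ∃ (f : Fin r → Fin n) (a : Fin r → ℕ), Function.Injective f ∧
        Finset.univ.image f ∈ facets (complementComplex Δ) ∧
        (∀ j, 1 ≤ a j ∧ a j ≤ m) ∧ (∑ j, a j) ≤ m + r - 1 ∧
        u = ∏ j, X (f j, a j)}) := by
  classical
  have hfin : (lqGen Δ r m).Finite := lqGen_finite
  set GF : Finset (Finset (Fin n × ℕ)) := hfin.toFinset with hGF
  set L0 : List (Finset (Fin n × ℕ)) := GF.sort (lqR n) with hL0
  set mn : Finset (Fin n × ℕ) → MvPolynomial (Fin n × ℕ) k :=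
    fun S => monomial (lqD S) 1 with hmn
  have hmemL0 : ∀ T, T ∈ L0 ↔ T ∈ lqGen Δ r m := by
    intro T
    rw [hL0, Finset.mem_sort, hGF, Set.Finite.mem_toFinset]
  have hsorted : L0.Pairwise (lqR n) := Finset.pairwise_sort _ _
  have hnodup : L0.Nodup := Finset.sort_nodup _ _
  have hstrict : ∀ j jj (hj : j < L0.length) (hjj : jj < L0.length), j < jj →
      lqW n (L0[j]'hj) < lqW n (L0[jj]'hjj) := by
    intro j jj hj hjj hlt
    have hle : lqR n (L0.get ⟨j, hj⟩) (L0.get ⟨jj, hjj⟩) :=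
      hsorted.rel_get_of_lt (show (⟨j, hj⟩ : Fin L0.length) < ⟨jj, hjj⟩ from hlt)
    have hne : L0.get ⟨j, hj⟩ ≠ L0.get ⟨jj, hjj⟩ := by
      intro hcontra
      have := List.nodup_iff_injective_get.1 hnodup hcontra
      rw [Fin.mk.injEq] at this
      omega
    have hle' : lqW n (L0.get ⟨j, hj⟩) ≤ lqW n (L0.get ⟨jj, hjj⟩) := hle
    rcases lq_W_lt_or hne with h' | h'
    · exact h'
    · exact absurd hle' (by omega)
  refine ⟨L0.map mn, ?_, ?_, ?_⟩
  · intro u hu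
    obtain ⟨S, _, rfl⟩ := List.mem_map.1 hu
    exact ⟨lqD S, rfl⟩
  · have hset : {u : MvPolynomial (Fin n × ℕ) k | u ∈ L0.map mn}
        = (fun S => (monomial (lqD S) (1 : k))) '' lqGen Δ r m := by
      ext u
      simp only [Set.mem_setOf_eq, List.mem_map, Set.mem_image]
      constructor
      · rintro ⟨S, hSL, rfl⟩
        exact ⟨S, (hmemL0 S).1 hSL, rfl⟩
      · rintro ⟨S, hS, rfl⟩
        exact ⟨S, (hmemL0 S).2 hS, rfl⟩
    rw [hset, lq_stmt_eq hr]
  · intro i h hi0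
    have hi : i < L0.length := by
      have : (L0.map mn).length = L0.length := List.length_map _
      omega
    set Si : Finset (Fin n × ℕ) := L0[i]'hi with hSidef
    have hSiGen : Si ∈ lqGen Δ r m := (hmemL0 Si).1 (List.getElem_mem hi)
    have hgetL : (L0.map mn).get ⟨i, h⟩ = mn Si := by
      rw [List.get_eq_getElem, List.getElem_map]
    have htake : ∀ T, T ∈ L0.take i ↔ T ∈ lqGen Δ r m ∧ lqW n T < lqW n Si := by
      intro T
      constructor
      · intro hT
        obtain ⟨j, hj, hTj⟩ := List.mem_iff_getElem.1 hT
        rw [List.length_take] at hj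
        have hj1 : j < i := lt_of_lt_of_le hj (min_le_left _ _)
        have hj2 : j < L0.length := lt_of_lt_of_le hj (min_le_right _ _)
        have hTj' : L0[j]'hj2 = T := by rw [← hTj, List.getElem_take]
        subst hTj'
        exact ⟨(hmemL0 _).1 (List.getElem_mem hj2), hstrict j i hj2 hi hj1⟩
      · rintro ⟨hTGen, hTW⟩
        obtain ⟨j, hj, hTj⟩ := List.mem_iff_getElem.1 ((hmemL0 T).2 hTGen)
        have hji : j < i := by
          by_contra hcon
          push_neg at hcon
          rcases eq_or_lt_of_le hcon with rfl | hlt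
          · have : lqW n Si = lqW n T := by rw [hSidef, ← hTj]
            omega
          · have h2 := hstrict i j hi hj hlt
            rw [hTj, ← hSidef] at h2
            omega
        refine List.mem_iff_getElem.2 ⟨j, ?_, ?_⟩
        · rw [List.length_take]
          omega
        · rw [List.getElem_take]
          exact hTj
    set Gi : Set (Finset (Fin n × ℕ)) := {T | T ∈ lqGen Δ r m ∧ lqW n T < lqW n Si} with hGi
    have hPset : {u : MvPolynomial (Fin n × ℕ) k | u ∈ (L0.map mn).take i}
        = (fun d => monomial d (1 : k)) '' (lqD '' Gi) := by
      rw [Set.image_image]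
      ext u
      simp only [Set.mem_setOf_eq, Set.mem_image, ← List.map_take, List.mem_map]
      constructor
      · rintro ⟨T, hT, rfl⟩
        exact ⟨T, (htake T).1 hT, rfl⟩
      · rintro ⟨T, hT, rfl⟩
        exact ⟨T, (htake T).2 hT, rfl⟩
    refine ⟨{s : Fin n × ℕ |
      (X s : MvPolynomial (Fin n × ℕ) k) * mn Si ∈
        Ideal.span {u : MvPolynomial (Fin n × ℕ) k | u ∈ (L0.map mn).take i}}, ?_⟩
    apply le_antisymm
    · intro f hf
      rw [hgetL] at hf
      have hf' : f * mn Si ∈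
          Ideal.span {u : MvPolynomial (Fin n × ℕ) k | u ∈ (L0.map mn).take i} :=
        Ideal.mem_colon_span_singleton.1 hf
      rw [hPset] at hf'
      refine mem_ideal_span_X_image.2 ?_
      intro e he
      have hco : coeff (e + lqD Si) (f * mn Si) = coeff e f := by
        rw [hmn]
        rw [coeff_mul_monomial, mul_one]
      have hsupp : e + lqD Si ∈ (f * mn Si).support := by
        rw [mem_support_iff, hco]
        exact mem_support_iff.1 he
      obtain ⟨dj, hdj, hle⟩ := mem_ideal_span_monomial_image.1 hf' _ hsupp
      obtain ⟨S', hS', rfl⟩ := hdj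
      obtain ⟨s', hs'S', hs'Si, S'', hS''Gen, hS''W, hS''sub⟩ :=
        lq_exchange hM hSiGen hS'.1 hS'.2
      refine ⟨s', ?_, ?_⟩
      · show (X s' : MvPolynomial (Fin n × ℕ) k) * mn Si ∈
          Ideal.span {u : MvPolynomial (Fin n × ℕ) k | u ∈ (L0.map mn).take i}
        rw [hPset, hmn]
        have hXm : (X s' : MvPolynomial (Fin n × ℕ) k) * monomial (lqD Si) 1
            = monomial (lqD (insert s' Si)) 1 := lqX_mul hs'Si
        rw [hXm]
        refine mem_ideal_span_monomial_image.2 ?_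
        intro xi hxi
        rw [support_monomial, if_neg one_ne_zero, Finset.mem_singleton] at hxi
        subst hxi
        exact ⟨lqD S'', ⟨S'', ⟨hS''Gen, hS''W⟩, rfl⟩, lqD_mono hS''sub⟩
      · have h1 := Finsupp.le_def.1 hle s'
        rw [Finsupp.add_apply, lqD_apply, lqD_apply, if_pos hs'S', if_neg hs'Si] at h1
        omega
    · rw [Ideal.span_le]
      rintro x ⟨s, hs, rfl⟩
      rw [SetLike.mem_coe, hgetL]
      exact Ideal.mem_colon_span_singleton.2 hs
end
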